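/- The polynomial PP₉(t) = (t+1)²(t+1/2)²(t+1/3)(t+1/6)·t²·(t−1/6) is positive definite on S^{47}: for every positive integer m, all points x₁, …, x_m on the unit sphere of EuclideanSpace ℝ (Fin 48), and all reals c₁, …, c_m, one has ∑_{i,j=1}^{m} c_i c_j · PP₉(⟨x_i, x_j⟩) ≥ 0. -/

import Mathlib

/-- The ninth partial product of the Newton form at the `T₁` node multiset. -/
noncomputable def PP9 (t : ℝ) : ℝ :=
  (t + 1) ^ 2 * (t + 1/2) ^ 2 * (t + 1/3) * (t + 1/6) * t ^ 2 * (t - 1/6)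

def IsGram {m : ℕ} (K : Fin m → Fin m → ℝ) : Prop :=
  ∃ (S : Type) (A : Finset S) (φ : S → Fin m → ℝ), ∀ i j, K i j = ∑ s ∈ A, φ s i * φ s j

theorem IsGram.energy {m : ℕ} {K : Fin m → Fin m → ℝ} (h : IsGram K) (c : Fin m → ℝ) :
    0 ≤ ∑ i, ∑ j, c i * c j * K i j := by
  obtain ⟨S, A, φ, hφ⟩ := h
  have : ∑ i, ∑ j, c i * c j * K i j = ∑ s ∈ A, (∑ i, c i * φ s i) ^ 2 :=
    calc ∑ i, ∑ j, c i * c j * K i j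
        = ∑ i, ∑ j, ∑ s ∈ A, (c i * φ s i) * (c j * φ s j) := by
          refine Finset.sum_congr rfl fun i _ => Finset.sum_congr rfl fun j _ => ?_
          rw [hφ, Finset.mul_sum]
          exact Finset.sum_congr rfl fun s _ => by ring
      _ = ∑ i, ∑ s ∈ A, ∑ j, (c i * φ s i) * (c j * φ s j) :=
          Finset.sum_congr rfl fun i _ => Finset.sum_comm
      _ = ∑ s ∈ A, ∑ i, ∑ j, (c i * φ s i) * (c j * φ s j) := Finset.sum_comm
      _ = ∑ s ∈ A, (∑ i, c i * φ s i) ^ 2 :=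
          Finset.sum_congr rfl fun s _ => by rw [sq, Finset.sum_mul_sum]
  rw [this]
  positivity

theorem IsGram.add {m : ℕ} {K L : Fin m → Fin m → ℝ} (hK : IsGram K) (hL : IsGram L) :
    IsGram (fun i j => K i j + L i j) := by
  obtain ⟨S, A, φ, hφ⟩ := hK
  obtain ⟨S', B, ψ, hψ⟩ := hL
  exact ⟨S ⊕ S', A.disjSum B, Sum.elim φ ψ, fun i j => by
    rw [Finset.sum_disjSum]; simp [hφ, hψ]⟩

theorem IsGram.mul {m : ℕ} {K L : Fin m → Fin m → ℝ} (hK : IsGram K) (hL : IsGram L) :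
    IsGram (fun i j => K i j * L i j) := by
  obtain ⟨S, A, φ, hφ⟩ := hK
  obtain ⟨S', B, ψ, hψ⟩ := hL
  refine ⟨S × S', A ×ˢ B, fun p i => φ p.1 i * ψ p.2 i, fun i j => ?_⟩
  show K i j * L i j = _
  rw [Finset.sum_product, hφ, hψ, Finset.sum_mul_sum]
  exact Finset.sum_congr rfl fun s _ => Finset.sum_congr rfl fun s' _ => by ring

theorem IsGram.smul {m : ℕ} {K : Fin m → Fin m → ℝ} (hK : IsGram K) {r : ℝ} (hr : 0 ≤ r) :
    IsGram (fun i j => r * K i j) := by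
  obtain ⟨S, A, φ, hφ⟩ := hK
  refine ⟨S, A, fun s i => Real.sqrt r * φ s i, fun i j => ?_⟩
  simp_rw [hφ, Finset.mul_sum]
  exact Finset.sum_congr rfl fun s _ => by
    rw [show Real.sqrt r * φ s i * (Real.sqrt r * φ s j) = (Real.sqrt r * Real.sqrt r) * (φ s i * φ s j) by ring, Real.mul_self_sqrt hr]

theorem IsGram.congr {m : ℕ} {K L : Fin m → Fin m → ℝ} (hK : IsGram K)
    (h : ∀ i j, L i j = K i j) : IsGram L := by
  obtain ⟨S, A, φ, hφ⟩ := hK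
  exact ⟨S, A, φ, fun i j => (h i j).trans (hφ i j)⟩

theorem gram2_id (u v : Fin 48 → ℝ) (hu : ∑ a, u a * u a = 1) (hv : ∑ a, v a * v a = 1) :
    ∑ p ∈ (Finset.univ ×ˢ Finset.univ : Finset (Fin 48 × Fin 48)),
      ((u p.1 * u p.2 - if p.1 = p.2 then (1:ℝ)/48 else 0) *
       (v p.1 * v p.2 - if p.1 = p.2 then (1:ℝ)/48 else 0))
      = (∑ a, u a * v a) ^ 2 - 1/48 := by
  rw [Finset.sum_product]
  have key : ∀ a b : Fin 48,
      (u a * u b - if a = b then (1:ℝ)/48 else 0) * (v a * v b - if a = b then (1:ℝ)/48 else 0)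
      = u a * v a * (u b * v b)
        - (if a = b then (1:ℝ)/48 * (u a * u b) else 0)
        - (if a = b then (1:ℝ)/48 * (v a * v b) else 0)
        + (if a = b then (1:ℝ)/2304 else 0) := by
    intro a b; by_cases h : a = b <;> simp [h] <;> ring
  simp_rw [key]
  simp only [Finset.sum_sub_distrib, Finset.sum_add_distrib]
  simp_rw [Finset.sum_ite_eq, Finset.mem_univ, if_true]
  rw [← Finset.sum_mul_sum]
  simp_rw [Finset.sum_const, Finset.card_univ, Fintype.card_fin]
  rw [← Finset.mul_sum, ← Finset.mul_sum, hu, hv, nsmul_eq_mul]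
  push_cast
  ring

theorem sum_if_const (p : Prop) [Decidable p] (f : Fin 48 → ℝ) :
    ∑ c, (if p then f c else 0) = if p then ∑ c, f c else 0 := by
  split <;> simp

theorem gram3_id (u v : Fin 48 → ℝ) (hu : ∑ a, u a * u a = 1) (hv : ∑ a, v a * v a = 1) :
    ∑ a : Fin 48, ∑ b : Fin 48, ∑ c : Fin 48,
      ((u a * u b * u c - (1/50) * ((if a = b then u c else 0) + (if a = c then u b else 0)
          + (if b = c then u a else 0))) *
       (v a * v b * v c - (1/50) * ((if a = b then v c else 0) + (if a = c then v b else 0)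
          + (if b = c then v a else 0))))
      = (∑ a, u a * v a) ^ 3 - (3/50) * (∑ a, u a * v a) := by
  have key : ∀ a b c : Fin 48,
      ((u a * u b * u c - (1/50) * ((if a = b then u c else 0) + (if a = c then u b else 0)
          + (if b = c then u a else 0))) *
       (v a * v b * v c - (1/50) * ((if a = b then v c else 0) + (if a = c then v b else 0)
          + (if b = c then v a else 0))))
      = (u a * v a) * (u b * v b) * (u c * v c)
        - (1/50) * ((if a = b then u a * u b else 0) * (u c * v c)
                  + (if a = c then u a * (u b * v b) * u c else 0)
                  + (if b = c then (u a * v a) * u b * u c else 0))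
        - (1/50) * ((if a = b then v a * v b else 0) * (u c * v c)
                  + (if a = c then v a * (u b * v b) * v c else 0)
                  + (if b = c then (u a * v a) * v b * v c else 0))
        + (1/2500) * ((if a = b then (1:ℝ) else 0) * (u c * v c)
                  + (if a = c then u b * v b else 0)
                  + (if b = c then u a * v a else 0)
                  + (if a = c then (if a = b then u c * v b else 0) else 0)
                  + (if a = c then (if a = b then u b * v c else 0) else 0)
                  + (if b = c then (if a = b then u c * v a else 0) else 0)
                  + (if b = c then (if a = b then u a * v c else 0) else 0)
                  + (if b = c then (if a = c then u b * v a else 0) else 0)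
                  + (if b = c then (if a = c then u a * v b else 0) else 0)) := by
    intro a b c
    by_cases h1 : a = b <;> by_cases h2 : a = c <;> by_cases h3 : b = c
    · simp only [if_pos h1, if_pos h2, if_pos h3]; ring
    · exact absurd (h1.symm.trans h2) h3
    · exact absurd (h1.trans h3) h2
    · simp only [if_pos h1, if_neg h2, if_neg h3]; ring
    · exact absurd (h2.trans h3.symm) h1
    · simp only [if_neg h1, if_pos h2, if_neg h3]; ring
    · simp only [if_neg h1, if_neg h2, if_pos h3]; ring
    · simp only [if_neg h1, if_neg h2, if_neg h3]; ring
  simp_rw [key]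
  simp only [mul_add, Finset.sum_add_distrib, Finset.sum_sub_distrib, ← Finset.mul_sum,
    Finset.sum_ite_eq, Finset.mem_univ, if_true]
  simp only [ite_mul, zero_mul, one_mul, Finset.sum_ite_eq, Finset.mem_univ, if_true,
    Finset.sum_const, Finset.card_univ, Fintype.card_fin, nsmul_eq_mul, ← Finset.sum_mul,
    ← Finset.mul_sum]
  have e1 : ∀ S : ℝ, ∑ x : Fin 48, (u x * S) * u x = (∑ x, u x * u x) * S := fun S => by
    rw [Finset.sum_mul]; exact Finset.sum_congr rfl fun x _ => by ring
  have e2 : ∀ S : ℝ, ∑ x : Fin 48, (v x * S) * v x = (∑ x, v x * v x) * S := fun S => by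
    rw [Finset.sum_mul]; exact Finset.sum_congr rfl fun x _ => by ring
  have e3 : ∑ i : Fin 48, ∑ i_1 : Fin 48, u i * v i * u i_1 * u i_1
      = (∑ i, u i * v i) * ∑ i, u i * u i := by
    rw [Finset.sum_mul_sum]
    exact Finset.sum_congr rfl fun i _ => Finset.sum_congr rfl fun j _ => by ring
  have e4 : ∑ i : Fin 48, ∑ i_1 : Fin 48, u i * v i * v i_1 * v i_1
      = (∑ i, u i * v i) * ∑ i, v i * v i := by
    rw [Finset.sum_mul_sum]
    exact Finset.sum_congr rfl fun i _ => Finset.sum_congr rfl fun j _ => by ring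
  have e5 : ∑ x : Fin 48, u x * ((48:ℝ) * v x) = 48 * ∑ x, u x * v x := by
    rw [Finset.mul_sum]; exact Finset.sum_congr rfl fun x _ => by ring
  rw [e1, e2, e3, e4, hu, hv]
  push_cast
  rw [e5]
  ring

theorem PP9_positive_definite (m : ℕ) (hm : 1 ≤ m)
    (x : Fin m → EuclideanSpace ℝ (Fin 48)) (hx : ∀ i, ‖x i‖ = 1)
    (c : Fin m → ℝ) :
    0 ≤ ∑ i : Fin m, ∑ j : Fin m, c i * c j * PP9 (inner ℝ (x i) (x j) : ℝ) := by
  have hnorm : ∀ i, ∑ a, x i a * x i a = 1 := by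
    intro i
    have h := real_inner_self_eq_norm_sq (x i)
    rw [hx i, PiLp.inner_apply] at h
    simpa [RCLike.inner_apply, conj_trivial, ← sq] using h
  have hinner : ∀ i j, (inner ℝ (x i) (x j) : ℝ) = ∑ a, x i a * x j a := by
    intro i j
    simp [PiLp.inner_apply, RCLike.inner_apply, conj_trivial]
    exact Finset.sum_congr rfl fun a _ => mul_comm _ _
  set T : Fin m → Fin m → ℝ := fun i j => ∑ a, x i a * x j a with hT
  have hg1 : IsGram T := ⟨Fin 48, Finset.univ, fun a i => x i a, fun i j => rfl⟩
  have hg2 : IsGram (fun i j => T i j ^ 2 - 1/48) := by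
    refine ⟨Fin 48 × Fin 48, Finset.univ ×ˢ Finset.univ,
      fun p i => x i p.1 * x i p.2 - if p.1 = p.2 then 1/48 else 0, fun i j => ?_⟩
    exact (gram2_id (fun a => x i a) (fun a => x j a) (hnorm i) (hnorm j)).symm
  have hg3 : IsGram (fun i j => T i j ^ 3 - 3/50 * T i j) := by
    refine ⟨Fin 48 × Fin 48 × Fin 48, Finset.univ ×ˢ Finset.univ ×ˢ Finset.univ,
      fun p i => x i p.1 * x i p.2.1 * x i p.2.2
        - (1/50) * ((if p.1 = p.2.1 then x i p.2.2 else 0)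
          + (if p.1 = p.2.2 then x i p.2.1 else 0)
          + (if p.2.1 = p.2.2 then x i p.1 else 0)), fun i j => ?_⟩
    rw [Finset.sum_product]
    simp_rw [Finset.sum_product]
    exact (gram3_id (fun a => x i a) (fun a => x j a) (hnorm i) (hnorm j)).symm
  have hG2G3 :
      IsGram (fun i j =>
        (34248943/648000000 : ℝ) * (T i j ^ 3 - 3/50 * T i j)
        + ((T i j ^ 3 - 3/50 * T i j) * ((T i j ^ 3 - 3/50 * T i j) * (T i j ^ 3 - 3/50 * T i j))
        + ((5482531/2923776000 : ℝ) * (T i j ^ 2 - 1/48)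
        + ((5771/5400 : ℝ) * ((T i j ^ 2 - 1/48) * (T i j ^ 3 - 3/50 * T i j))
        + ((10/3 : ℝ) * ((T i j ^ 2 - 1/48) * ((T i j ^ 3 - 3/50 * T i j) * (T i j ^ 3 - 3/50 * T i j)))
        + ((4619503/30456000 : ℝ) * ((T i j ^ 2 - 1/48) * (T i j ^ 2 - 1/48))
        + ((1981/450 : ℝ) * ((T i j ^ 2 - 1/48) * ((T i j ^ 2 - 1/48) * (T i j ^ 3 - 3/50 * T i j)))
        + ((3197/1080 : ℝ) * ((T i j ^ 2 - 1/48) * ((T i j ^ 2 - 1/48) * (T i j ^ 2 - 1/48)))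
        + ((48749/25000000 : ℝ) * T i j
        + (11975/487296 : ℝ) * (T i j * (T i j ^ 3 - 3/50 * T i j))))))))))) := by
    exact (hg3.smul (by norm_num)).add ((hg3.mul (hg3.mul hg3)).add
      ((hg2.smul (by norm_num)).add (((hg2.mul hg3).smul (by norm_num)).add
      (((hg2.mul (hg3.mul hg3)).smul (by norm_num)).add (((hg2.mul hg2).smul (by norm_num)).add
      (((hg2.mul (hg2.mul hg3)).smul (by norm_num)).add
      (((hg2.mul (hg2.mul hg2)).smul (by norm_num)).add
      ((hg1.smul (by norm_num)).add ((hg1.mul hg3).smul (by norm_num))))))))))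
  have hPP9 : IsGram (fun i j => PP9 (T i j)) := by
    refine hG2G3.congr fun i j => ?_
    simp only [PP9]
    ring
  have := hPP9.energy c
  simp_rw [hinner]
  exact this
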